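/- If G is a graph of order n with m edges whose minimum degree is δ, then the spectral radius λ(G) of the adjacency matrix of G satisfies λ(G) ≤ (δ-1)/2 + sqrt(2m - nδ + (δ+1)²/4). -/

import Mathlib

open SimpleGraph Finset

/-- Spectral radius (largest adjacency eigenvalue) of a graph on `Fin n`. -/
noncomputable def specRad {n : ℕ} (G : SimpleGraph (Fin n)) : ℝ :=
  haveI := Classical.decRel G.Adj
  ⨆ i, (Matrix.IsHermitian.eigenvalues
    (by
      rw [Matrix.IsHermitian, Matrix.conjTranspose_eq_transpose_of_trivial]
      exact G.isSymm_adjMatrix : (G.adjMatrix ℝ).IsHermitian)) i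

/-- `M_k(n) = K_k ∨ (K_{n-2k} + K̄_k)`: vertices `0..k-1` are the independent set,
vertices `k..2k-1` their joint neighborhood, vertices `k..n-1` a clique. -/
def Mgraph (k n : ℕ) : SimpleGraph (Fin n) where
  Adj i j := i ≠ j ∧ ((k ≤ i.val ∧ k ≤ j.val) ∨
    (i.val < k ∧ k ≤ j.val ∧ j.val < 2 * k) ∨ (j.val < k ∧ k ≤ i.val ∧ i.val < 2 * k))
  symm := ⟨fun i j h => ⟨h.1.symm, by tauto⟩⟩
  loopless := ⟨fun i h => h.1 rfl⟩

instance (k n : ℕ) : DecidableRel (Mgraph k n).Adj := fun _ _ => instDecidableAnd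

/-- `L_k(n) = K_1 ∨ (K_{n-k-1} + K_k)`: a `K_{k+1}` on vertices `0..k` and a
`K_{n-k}` on vertices `k..n-1`, sharing the vertex `k`. -/
def Lgraph (k n : ℕ) : SimpleGraph (Fin n) where
  Adj i j := i ≠ j ∧ ((i.val ≤ k ∧ j.val ≤ k) ∨ (k ≤ i.val ∧ k ≤ j.val))
  symm := ⟨fun i j h => ⟨h.1.symm, by tauto⟩⟩
  loopless := ⟨fun i h => h.1 rfl⟩

instance (k n : ℕ) : DecidableRel (Lgraph k n).Adj := fun _ _ => instDecidableAnd

/-- `N_k(n) = K_k ∨ (K_{n-2k-1} + K̄_{k+1})`: vertices `0..k` are the independent set,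
vertices `k+1..2k` their joint neighborhood, vertices `k+1..n-1` a clique. -/
def Ngraph (k n : ℕ) : SimpleGraph (Fin n) where
  Adj i j := i ≠ j ∧ ((k + 1 ≤ i.val ∧ k + 1 ≤ j.val) ∨
    (i.val < k + 1 ∧ k + 1 ≤ j.val ∧ j.val < 2 * k + 1) ∨
    (j.val < k + 1 ∧ k + 1 ≤ i.val ∧ i.val < 2 * k + 1))
  symm := ⟨fun i j h => ⟨h.1.symm, by tauto⟩⟩
  loopless := ⟨fun i h => h.1 rfl⟩

instance (k n : ℕ) : DecidableRel (Ngraph k n).Adj := fun _ _ => instDecidableAnd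

/-- The disjoint union `K_a + K_{n-a}` on `Fin n`: vertices `0..a-1` form one clique,
vertices `a..n-1` the other. -/
def DUgraph (a n : ℕ) : SimpleGraph (Fin n) where
  Adj i j := i ≠ j ∧ ((i.val < a ∧ j.val < a) ∨ (a ≤ i.val ∧ a ≤ j.val))
  symm := ⟨fun i j h => ⟨h.1.symm, by tauto⟩⟩
  loopless := ⟨fun i h => h.1 rfl⟩

instance (a n : ℕ) : DecidableRel (DUgraph a n).Adj := fun _ _ => instDecidableAnd

/-- `G` has a Hamiltonian path. -/
def HasHamiltonianPath {V : Type*} [DecidableEq V] (G : SimpleGraph V) : Prop :=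
  ∃ (u v : V) (p : G.Walk u v), p.IsHamiltonian

/-- `G` is Hamiltonian-connected. -/
def HamiltonianConnected {V : Type*} [DecidableEq V] (G : SimpleGraph V) : Prop :=
  ∀ u v : V, u ≠ v → ∃ p : G.Walk u v, p.IsHamiltonian

open Matrix

lemma auxHerm {n : ℕ} (G : SimpleGraph (Fin n)) [DecidableRel G.Adj] :
    (G.adjMatrix ℝ).IsHermitian := by
  rw [Matrix.IsHermitian, Matrix.conjTranspose_eq_transpose_of_trivial]
  exact G.isSymm_adjMatrix

lemma auxEigCongr {n : ℕ} {A B : Matrix (Fin n) (Fin n) ℝ} (h : A = B)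
    (hA : A.IsHermitian) (hB : B.IsHermitian) (i : Fin n) :
    hA.eigenvalues i = hB.eigenvalues i := by
  subst h; rfl

lemma auxSpecRadEq {n : ℕ} (G : SimpleGraph (Fin n)) [inst : DecidableRel G.Adj] :
    specRad G = ⨆ i, (auxHerm G).eigenvalues i := by
  unfold specRad
  exact iSup_congr fun i => auxEigCongr (by
    ext i j
    by_cases h : G.Adj i j <;> simp [h]) _ _ i

lemma auxPosSemidef {n : ℕ} {A : Matrix (Fin n) (Fin n) ℝ} (hA : A.IsHermitian) (μ : ℝ)
    (hle : ∀ i, hA.eigenvalues i ≤ μ) : (μ • (1 : Matrix (Fin n) (Fin n) ℝ) - A).PosSemidef := by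
  have hU : (hA.eigenvectorUnitary : Matrix (Fin n) (Fin n) ℝ) *
      (star (hA.eigenvectorUnitary : Matrix (Fin n) (Fin n) ℝ)) = 1 :=
    Matrix.mem_unitaryGroup_iff.mp hA.eigenvectorUnitary.2
  have hco : (RCLike.ofReal ∘ hA.eigenvalues : Fin n → ℝ) = hA.eigenvalues := rfl
  have key : μ • (1 : Matrix (Fin n) (Fin n) ℝ) - A
      = (hA.eigenvectorUnitary : Matrix (Fin n) (Fin n) ℝ) *
        Matrix.diagonal (fun i => μ - hA.eigenvalues i) *
        (star (hA.eigenvectorUnitary : Matrix (Fin n) (Fin n) ℝ)) := by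
    have hd : Matrix.diagonal (fun i => μ - hA.eigenvalues i)
        = μ • (1 : Matrix (Fin n) (Fin n) ℝ) - Matrix.diagonal hA.eigenvalues := by
      rw [Matrix.smul_one_eq_diagonal, Matrix.diagonal_sub]
    rw [hd, Matrix.mul_sub, Matrix.sub_mul, Matrix.mul_smul, Matrix.smul_mul, mul_one, hU]
    congr 1
    rw [← hco]
    exact hA.spectral_theorem
  rw [key, Matrix.star_eq_conjTranspose]
  exact (Matrix.posSemidef_diagonal_iff.mpr
    (fun i => by linarith [hle i])).mul_mul_conjTranspose_same _

lemma auxRayleigh {n : ℕ} {A : Matrix (Fin n) (Fin n) ℝ} (μ : ℝ)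
    (hM : (μ • (1 : Matrix (Fin n) (Fin n) ℝ) - A).PosSemidef) :
    ∀ z : Fin n → ℝ, z ⬝ᵥ (A *ᵥ z) ≤ μ * (z ⬝ᵥ z) := by
  intro z
  have h0 := hM.dotProduct_mulVec_nonneg z
  simp only [star_trivial, Matrix.sub_mulVec, Matrix.smul_mulVec, Matrix.one_mulVec,
    dotProduct_sub, dotProduct_smul, smul_eq_mul] at h0
  linarith

lemma auxSwap {n : ℕ} (G : SimpleGraph (Fin n)) [DecidableRel G.Adj] (F : Fin n → Fin n → ℝ) :
    ∑ v, ∑ u ∈ G.neighborFinset v, F v u = ∑ u, ∑ v ∈ G.neighborFinset u, F v u := by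
  simp only [neighborFinset_eq_filter, Finset.sum_filter]
  rw [Finset.sum_comm]
  refine Finset.sum_congr rfl fun u _ => Finset.sum_congr rfl fun v _ => ?_
  by_cases h : G.Adj v u
  · rw [if_pos h, if_pos (G.adj_symm h)]
  · rw [if_neg h, if_neg (fun h' => h (G.adj_symm h'))]

lemma auxDeg {n : ℕ} (G : SimpleGraph (Fin n)) [DecidableRel G.Adj] (k : Fin n) :
    ∑ v ∈ G.neighborFinset k, (G.degree v : ℝ) ≤
      2 * (G.edgeFinset.card : ℝ) - (G.minDegree : ℝ) * ((n : ℝ) - 1)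
        + ((G.minDegree : ℝ) - 1) * (G.degree k : ℝ) := by
  classical
  have hins : k ∉ G.neighborFinset k := G.notMem_neighborFinset_self k
  have h1 : ∑ v ∈ insert k (G.neighborFinset k), G.degree v
      + ∑ v ∈ (insert k (G.neighborFinset k))ᶜ, G.degree v = ∑ v, G.degree v :=
    Finset.sum_add_sum_compl _ _
  rw [Finset.sum_insert hins] at h1
  have h2 : ((insert k (G.neighborFinset k))ᶜ.card) * G.minDegree
      ≤ ∑ v ∈ (insert k (G.neighborFinset k))ᶜ, G.degree v := by
    rw [← smul_eq_mul]
    exact Finset.card_nsmul_le_sum _ _ _ (fun v _ => G.minDegree_le_degree v)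
  have h3 : ((insert k (G.neighborFinset k))ᶜ.card : ℝ) = (n : ℝ) - 1 - (G.degree k : ℝ) := by
    have h5 : G.degree k + 1 ≤ n := by
      have := G.degree_lt_card_verts k
      simpa [Fintype.card_fin] using this
    rw [Finset.card_compl, Finset.card_insert_of_notMem hins, card_neighborFinset_eq_degree]
    rw [Fintype.card_fin]
    push_cast [Nat.cast_sub (by omega : G.degree k + 1 ≤ n)]
    ring
  have h4 : (∑ v, (G.degree v : ℝ)) = 2 * (G.edgeFinset.card : ℝ) := by
    exact_mod_cast congrArg (Nat.cast : ℕ → ℝ) G.sum_degrees_eq_twice_card_edges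
  have h1R : (G.degree k : ℝ) + ∑ v ∈ G.neighborFinset k, (G.degree v : ℝ)
      + ∑ v ∈ (insert k (G.neighborFinset k))ᶜ, (G.degree v : ℝ) = ∑ v, (G.degree v : ℝ) := by
    exact_mod_cast congrArg (Nat.cast : ℕ → ℝ) h1
  have h2R : ((((insert k (G.neighborFinset k))ᶜ.card : ℕ)) : ℝ) * (G.minDegree : ℝ)
      ≤ ∑ v ∈ (insert k (G.neighborFinset k))ᶜ, (G.degree v : ℝ) := by
    exact_mod_cast Nat.cast_le.mpr h2
  rw [h3] at h2R
  linarith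

lemma auxPerron {n : ℕ} [NeZero n] (G : SimpleGraph (Fin n)) [DecidableRel G.Adj] :
    ∃ y : Fin n → ℝ, (∀ i, 0 ≤ y i) ∧ (∃ j, 0 < y j) ∧
      G.adjMatrix ℝ *ᵥ y = specRad G • y := by
  classical
  set A := G.adjMatrix ℝ with hAdef
  have hA : A.IsHermitian := auxHerm G
  obtain ⟨i₀, hi₀⟩ := Finite.exists_max hA.eigenvalues
  have hμ : specRad G = hA.eigenvalues i₀ := by
    rw [auxSpecRadEq G]
    exact le_antisymm (ciSup_le hi₀) (le_ciSup (Set.Finite.bddAbove (Set.finite_range _)) i₀)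
  set μ := specRad G with hμdef
  have hle : ∀ i, hA.eigenvalues i ≤ μ := fun i => by rw [hμ]; exact hi₀ i
  have hM : (μ • (1 : Matrix (Fin n) (Fin n) ℝ) - A).PosSemidef := auxPosSemidef hA μ hle
  have hRay := auxRayleigh μ hM
  set x : Fin n → ℝ := ⇑(hA.eigenvectorBasis i₀) with hxdef
  have hxev : A *ᵥ x = μ • x := by rw [hμ]; exact hA.mulVec_eigenvectorBasis i₀
  have hxj : ∃ j, x j ≠ 0 := by
    have hne := hA.eigenvectorBasis.orthonormal.ne_zero i₀
    by_contra h
    push_neg at h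
    exact hne (by ext j; exact h j)
  set y : Fin n → ℝ := fun i => |x i| with hydef
  have hexp : ∀ z : Fin n → ℝ, z ⬝ᵥ (A *ᵥ z) = ∑ v, ∑ u ∈ G.neighborFinset v, z v * z u := by
    intro z
    simp only [dotProduct, hAdef, SimpleGraph.adjMatrix_mulVec_apply, Finset.mul_sum]
  have hyAy : x ⬝ᵥ (A *ᵥ x) ≤ y ⬝ᵥ (A *ᵥ y) := by
    rw [hexp, hexp]
    refine Finset.sum_le_sum fun v _ => Finset.sum_le_sum fun u _ => ?_
    calc x v * x u ≤ |x v * x u| := le_abs_self _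
    _ = |x v| * |x u| := abs_mul _ _
    _ = y v * y u := by simp [hydef]
  have hxx : x ⬝ᵥ x = y ⬝ᵥ y := by
    simp only [dotProduct, hydef, abs_mul_abs_self]
  have hxAx : x ⬝ᵥ (A *ᵥ x) = μ * (y ⬝ᵥ y) := by
    rw [hxev, dotProduct_smul, smul_eq_mul, hxx]
  have hzero : (star y) ⬝ᵥ ((μ • (1 : Matrix (Fin n) (Fin n) ℝ) - A) *ᵥ y) = 0 := by
    have hub := hRay y
    simp only [star_trivial, Matrix.sub_mulVec, Matrix.smul_mulVec, Matrix.one_mulVec,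
      dotProduct_sub, dotProduct_smul, smul_eq_mul]
    linarith
  have hker := (hM.dotProduct_mulVec_zero_iff y).mp hzero
  rw [Matrix.sub_mulVec, Matrix.smul_mulVec, Matrix.one_mulVec, sub_eq_zero] at hker
  refine ⟨y, fun i => abs_nonneg _, ?_, hker.symm⟩
  obtain ⟨j, hj⟩ := hxj
  exact ⟨j, abs_pos.mpr hj⟩

/-- Hong–Shu–Fang / Nikiforov: `λ(G) ≤ (δ-1)/2 + √(2m - nδ + (δ+1)²/4)`. -/
theorem stmt_0 (n : ℕ) (G : SimpleGraph (Fin n)) [DecidableRel G.Adj] :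
    specRad G ≤ ((G.minDegree : ℝ) - 1) / 2 +
      Real.sqrt (2 * (G.edgeFinset.card : ℝ) - (n : ℝ) * (G.minDegree : ℝ) +
        ((G.minDegree : ℝ) + 1) ^ 2 / 4) := by
  rcases Nat.eq_zero_or_pos n with hn | hn
  · subst hn
    have h1 : specRad G = 0 := by
      unfold specRad
      exact Real.iSup_of_isEmpty _
    have h2 : G.minDegree = 0 := by simp [SimpleGraph.minDegree]
    have h3 : G.edgeFinset = ∅ := Finset.eq_empty_of_forall_notMem (fun e _ => by
      induction e using Sym2.ind with
      | _ a b => exact a.elim0)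
    rw [h1, h2, h3]
    norm_num
  · haveI : NeZero n := ⟨hn.ne'⟩
    obtain ⟨y, hy0, ⟨j, hyj⟩, hAy⟩ := auxPerron G
    set μ := specRad G with hμdef
    set δ := (G.minDegree : ℝ) with hδdef
    set m := (G.edgeFinset.card : ℝ) with hmdef
    set t := ∑ v, y v with htdef
    have ht : 0 < t := Finset.sum_pos' (fun i _ => hy0 i) ⟨j, Finset.mem_univ j, hyj⟩
    have hmv : ∀ v, ∑ u ∈ G.neighborFinset v, y u = μ * y v := by
      intro v
      have h := congrFun hAy v
      simpa using h
    have hconst : ∀ (v : Fin n) (c : ℝ), ∑ _u ∈ G.neighborFinset v, c = (G.degree v : ℝ) * c := by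
      intro v c
      rw [Finset.sum_const, card_neighborFinset_eq_degree, nsmul_eq_mul]
    have hS1 : ∑ v, (G.degree v : ℝ) * y v = μ * t := by
      calc ∑ v, (G.degree v : ℝ) * y v = ∑ v, ∑ _u ∈ G.neighborFinset v, y v :=
            Finset.sum_congr rfl fun v _ => (hconst v (y v)).symm
      _ = ∑ v, ∑ u ∈ G.neighborFinset v, y u := auxSwap G fun v _ => y v
      _ = ∑ v, μ * y v := Finset.sum_congr rfl fun v _ => hmv v
      _ = μ * t := by rw [htdef, Finset.mul_sum]
    have hS2 : μ * (μ * t) = ∑ k, (∑ v ∈ G.neighborFinset k, (G.degree v : ℝ)) * y k := by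
      calc μ * (μ * t) = μ * ∑ v, (G.degree v : ℝ) * y v := by rw [hS1]
      _ = ∑ v, (G.degree v : ℝ) * (μ * y v) := by
            rw [Finset.mul_sum]; exact Finset.sum_congr rfl fun v _ => by ring
      _ = ∑ v, (G.degree v : ℝ) * ∑ u ∈ G.neighborFinset v, y u :=
            Finset.sum_congr rfl fun v _ => by rw [hmv v]
      _ = ∑ v, ∑ u ∈ G.neighborFinset v, (G.degree v : ℝ) * y u :=
            Finset.sum_congr rfl fun v _ => Finset.mul_sum _ _ _
      _ = ∑ u, ∑ v ∈ G.neighborFinset u, (G.degree v : ℝ) * y u := auxSwap G _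
      _ = ∑ k, (∑ v ∈ G.neighborFinset k, (G.degree v : ℝ)) * y k :=
            Finset.sum_congr rfl fun k _ => (Finset.sum_mul _ _ _).symm
    have hQ : μ * μ ≤ 2 * m - δ * ((n:ℝ) - 1) + (δ - 1) * μ := by
      have hmain : μ * (μ * t) ≤ (2 * m - δ * ((n:ℝ) - 1)) * t + (δ - 1) * (μ * t) := by
        rw [hS2]
        calc ∑ k, (∑ v ∈ G.neighborFinset k, (G.degree v : ℝ)) * y k
            ≤ ∑ k, (2 * m - δ * ((n:ℝ) - 1) + (δ - 1) * (G.degree k : ℝ)) * y k :=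
              Finset.sum_le_sum fun k _ =>
                mul_le_mul_of_nonneg_right (auxDeg G k) (hy0 k)
        _ = (2 * m - δ * ((n:ℝ) - 1)) * t + (δ - 1) * ∑ k, (G.degree k : ℝ) * y k := by
              rw [htdef, Finset.mul_sum, Finset.mul_sum, ← Finset.sum_add_distrib]
              exact Finset.sum_congr rfl fun k _ => by ring
        _ = (2 * m - δ * ((n:ℝ) - 1)) * t + (δ - 1) * (μ * t) := by rw [hS1]
      have h2 : (μ * μ - (2 * m - δ * ((n:ℝ) - 1)) - (δ - 1) * μ) * t ≤ 0 * t := by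
        nlinarith [hmain]
      have h3 := le_of_mul_le_mul_right h2 ht
      linarith
    rcases le_or_gt μ ((δ - 1) / 2) with hc | hc
    · refine hc.trans ?_
      linarith [Real.sqrt_nonneg (2 * m - (n:ℝ) * δ + (δ + 1) ^ 2 / 4)]
    · have h5 : (μ - (δ - 1) / 2) ^ 2 ≤ 2 * m - (n:ℝ) * δ + (δ + 1) ^ 2 / 4 := by
        nlinarith [hQ]
      have h6 : μ - (δ - 1) / 2 ≤ Real.sqrt (2 * m - (n:ℝ) * δ + (δ + 1) ^ 2 / 4) := by
        rw [show μ - (δ - 1) / 2 = Real.sqrt ((μ - (δ - 1) / 2) ^ 2) from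
          (Real.sqrt_sq (by linarith)).symm]
        exact Real.sqrt_le_sqrt h5
      linarith
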